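/- Temporal policy gradient theorem (finite-horizon, finite case): for a finite MDP with episodes of fixed length T, positive differentiable policy π_θ, and trajectory distribution p_θ(τ) = p_init(s_0) ∏_{t=0}^{T−1} π_θ(a_t|s_t) p(s_{t+1}|s_t,a_t), the derivative of V^θ = E_{τ∼p_θ}[∑_{t=0}^{T} r(s_t)] equals E_{τ∼p_θ}[∑_{t=0}^{T−1} (d/dθ log π_θ(a_t|s_t)) ∑_{t'=t+1}^{T} r(s_{t'})]. -/

import Mathlib

/-- Probability of the trajectory `(s, a)` of horizon `T`:
`p_init(s_0) ∏_{t=0}^{T-1} π_θ(a_t|s_t) p(s_{t+1}|s_t,a_t)`. -/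
def trajProb {S A : Type} {T : ℕ} (pinit : S → ℝ) (p : S → A → S → ℝ)
    (πθ : S → A → ℝ) (s : Fin (T + 1) → S) (a : Fin T → A) : ℝ :=
  pinit (s 0) * ∏ t : Fin T, πθ (s t.castSucc) (a t) * p (s t.castSucc) (a t) (s t.succ)

/-- Temporal policy gradient theorem (finite-horizon, finite case): for a
finite MDP with episodes of fixed length `T`, positive differentiable policy
`π_θ` and trajectory distribution `p_θ`, the derivative of
`V^θ = E_{τ∼p_θ}[∑_{t=0}^{T} r(s_t)]` equals
`E_{τ∼p_θ}[∑_{t=0}^{T−1} (d/dθ log π_θ(a_t|s_t)) ∑_{t'=t+1}^{T} r(s_{t'})]`. -/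
lemma sum_snoc {S : Type} [Fintype S] {β : Type} [AddCommMonoid β] {n : ℕ}
    (g : (Fin (n + 1) → S) → β) :
    ∑ f : Fin (n + 1) → S, g f = ∑ f : Fin n → S, ∑ x : S, g (Fin.snoc f x) := by
  have := (Fintype.sum_equiv ((Equiv.prodComm (Fin n → S) S).trans (Fin.snocEquiv fun _ => S))
    (fun p : (Fin n → S) × S => g (Fin.snoc p.1 p.2)) g (fun p => rfl))
  rw [← this, Fintype.sum_prod_type]

lemma marg_zero {S A : Type} [Fintype S] [Fintype A]
    (πθ : S → A → ℝ) (p : S → A → S → ℝ) (L : S → A → ℝ)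
    (hπ : ∀ s, ∑ a : A, πθ s a = 1) (hp : ∀ s a, ∑ s' : S, p s a s' = 1)
    (hL : ∀ s, ∑ a : A, πθ s a * L s a = 0) :
    ∀ (T t : ℕ) (ht : t < T) (c : S → ℝ) (G : (Fin (T + 1) → S) → ℝ),
      (∀ s s' : Fin (T + 1) → S, (∀ j : Fin (T + 1), (j : ℕ) ≤ t → s j = s' j) → G s = G s') →
      ∑ s : Fin (T + 1) → S, ∑ a : Fin T → A,
        (c (s 0) * ∏ j : Fin T, πθ (s j.castSucc) (a j) * p (s j.castSucc) (a j) (s j.succ))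
          * L (s ⟨t, Nat.lt_succ_of_lt ht⟩) (a ⟨t, ht⟩) * G s = 0 := by
  intro T
  induction T with
  | zero => intro t ht; exact absurd ht (Nat.not_lt_zero t)
  | succ T IH =>
    intro t ht c G hG
    rw [sum_snoc]
    have key : ∀ (s' : Fin (T + 1) → S) (x : S) (a : Fin (T + 1) → A),
        (c ((Fin.snoc s' x : Fin (T + 2) → S) 0) * ∏ j : Fin (T + 1),
            πθ ((Fin.snoc s' x : Fin (T + 2) → S) j.castSucc) (a j) *
              p ((Fin.snoc s' x : Fin (T + 2) → S) j.castSucc) (a j)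
                ((Fin.snoc s' x : Fin (T + 2) → S) j.succ))
        = (c (s' 0) * ∏ j : Fin T,
            πθ (s' j.castSucc) (a j.castSucc) * p (s' j.castSucc) (a j.castSucc) (s' j.succ))
          * (πθ (s' (Fin.last T)) (a (Fin.last T)) * p (s' (Fin.last T)) (a (Fin.last T)) x) := by
      intro s' x a
      rw [Fin.prod_univ_castSucc]
      have h0 : (0 : Fin (T + 2)) = Fin.castSucc 0 := rfl
      simp only [h0, Fin.snoc_castSucc, Fin.succ_castSucc, Fin.succ_last,
        Fin.snoc_last, mul_assoc]
    -- G does not depend on the last coordinate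
    have hGx : ∀ (s' : Fin (T + 1) → S) (x : S),
        G (Fin.snoc s' x) = G (Fin.snoc s' (s' 0)) := by
      intro s' x
      apply hG
      intro j hj
      have hjlt : (j : ℕ) < T + 1 := lt_of_le_of_lt hj ht
      have hje : j = Fin.castSucc ⟨(j : ℕ), hjlt⟩ := Fin.ext rfl
      rw [hje, Fin.snoc_castSucc, Fin.snoc_castSucc]
    rcases Nat.lt_succ_iff_lt_or_eq.mp ht with ht' | heq
    · -- t < T : marginalize the last step and apply the induction hypothesis
      have hsnocS : ∀ (s' : Fin (T + 1) → S) (x : S),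
          (Fin.snoc s' x : Fin (T + 2) → S) ⟨t, Nat.lt_succ_of_lt ht⟩
            = s' ⟨t, Nat.lt_succ_of_lt ht'⟩ := by
        intro s' x
        have : (⟨t, Nat.lt_succ_of_lt ht⟩ : Fin (T + 2))
            = Fin.castSucc ⟨t, Nat.lt_succ_of_lt ht'⟩ := Fin.ext rfl
        rw [this, Fin.snoc_castSucc]
      have hsnocA : ∀ (a' : Fin T → A) (b : A),
          (Fin.snoc a' b : Fin (T + 1) → A) ⟨t, ht⟩ = a' ⟨t, ht'⟩ := by
        intro a' b
        have : (⟨t, ht⟩ : Fin (T + 1)) = Fin.castSucc ⟨t, ht'⟩ := Fin.ext rfl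
        rw [this, Fin.snoc_castSucc]
      have main : ∀ s' : Fin (T + 1) → S,
          (∑ x : S, ∑ a : Fin (T + 1) → A,
            (c ((Fin.snoc s' x : Fin (T + 2) → S) 0) * ∏ j : Fin (T + 1),
              πθ ((Fin.snoc s' x : Fin (T + 2) → S) j.castSucc) (a j) *
                p ((Fin.snoc s' x : Fin (T + 2) → S) j.castSucc) (a j)
                  ((Fin.snoc s' x : Fin (T + 2) → S) j.succ))
              * L ((Fin.snoc s' x : Fin (T + 2) → S) ⟨t, Nat.lt_succ_of_lt ht⟩) (a ⟨t, ht⟩)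
              * G (Fin.snoc s' x))
          = ∑ a' : Fin T → A,
            (c (s' 0) * ∏ j : Fin T,
              πθ (s' j.castSucc) (a' j) * p (s' j.castSucc) (a' j) (s' j.succ))
              * L (s' ⟨t, Nat.lt_succ_of_lt ht'⟩) (a' ⟨t, ht'⟩) * G (Fin.snoc s' (s' 0)) := by
        intro s'
        calc
          _ = ∑ x : S, ∑ a' : Fin T → A, ∑ b : A,
              ((c (s' 0) * ∏ j : Fin T,
                  πθ (s' j.castSucc) (a' j) * p (s' j.castSucc) (a' j) (s' j.succ))
                * L (s' ⟨t, Nat.lt_succ_of_lt ht'⟩) (a' ⟨t, ht'⟩) * G (Fin.snoc s' (s' 0)))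
                * (πθ (s' (Fin.last T)) b * p (s' (Fin.last T)) b x) := by
            refine Finset.sum_congr rfl fun x _ => ?_
            rw [sum_snoc (S := A)]
            refine Finset.sum_congr rfl fun a' _ => Finset.sum_congr rfl fun b _ => ?_
            rw [key, hGx, hsnocS, hsnocA]
            simp only [Fin.snoc_castSucc, Fin.snoc_last]
            ring
          _ = ∑ a' : Fin T → A, ∑ x : S, ∑ b : A,
              ((c (s' 0) * ∏ j : Fin T,
                  πθ (s' j.castSucc) (a' j) * p (s' j.castSucc) (a' j) (s' j.succ))
                * L (s' ⟨t, Nat.lt_succ_of_lt ht'⟩) (a' ⟨t, ht'⟩) * G (Fin.snoc s' (s' 0)))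
                * (πθ (s' (Fin.last T)) b * p (s' (Fin.last T)) b x) := Finset.sum_comm
          _ = _ := by
            refine Finset.sum_congr rfl fun a' _ => ?_
            rw [Finset.sum_comm]
            have hx : ∀ (M : ℝ) (b : A),
                ∑ x : S, M * (πθ (s' (Fin.last T)) b * p (s' (Fin.last T)) b x)
                  = M * πθ (s' (Fin.last T)) b := by
              intro M b
              simp only [← mul_assoc]
              rw [← Finset.mul_sum, hp, mul_one]
            simp only [hx]
            rw [← Finset.mul_sum, hπ, mul_one]
      have hG' : ∀ w w' : Fin (T + 1) → S,
          (∀ j : Fin (T + 1), (j : ℕ) ≤ t → w j = w' j) →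
          G (Fin.snoc w (w 0)) = G (Fin.snoc w' (w' 0)) := by
        intro w w' h
        apply hG
        intro j hj
        have hjlt : (j : ℕ) < T + 1 := lt_of_le_of_lt hj ht
        have hje : j = Fin.castSucc ⟨(j : ℕ), hjlt⟩ := Fin.ext rfl
        rw [hje, Fin.snoc_castSucc, Fin.snoc_castSucc]
        exact h _ hj
      calc
        _ = ∑ s' : Fin (T + 1) → S, ∑ a' : Fin T → A,
            (c (s' 0) * ∏ j : Fin T,
              πθ (s' j.castSucc) (a' j) * p (s' j.castSucc) (a' j) (s' j.succ))
              * L (s' ⟨t, Nat.lt_succ_of_lt ht'⟩) (a' ⟨t, ht'⟩)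
              * (fun w => G (Fin.snoc w (w 0))) s' :=
          Finset.sum_congr rfl fun s' _ => main s'
        _ = 0 := IH t ht' c (fun w => G (Fin.snoc w (w 0))) hG'
    · -- t = T : the last step itself carries the score factor
      subst heq
      refine Finset.sum_eq_zero fun s' _ => ?_
      have hsnocS : ∀ x : S,
          (Fin.snoc s' x : Fin (t + 2) → S) ⟨t, Nat.lt_succ_of_lt ht⟩ = s' (Fin.last t) := by
        intro x
        have : (⟨t, Nat.lt_succ_of_lt ht⟩ : Fin (t + 2))
            = Fin.castSucc (Fin.last t) := Fin.ext rfl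
        rw [this, Fin.snoc_castSucc]
      have hsnocA : ∀ (a' : Fin t → A) (b : A),
          (Fin.snoc a' b : Fin (t + 1) → A) ⟨t, ht⟩ = b := by
        intro a' b
        have : (⟨t, ht⟩ : Fin (t + 1)) = Fin.last t := Fin.ext rfl
        rw [this, Fin.snoc_last]
      calc
        _ = ∑ x : S, ∑ a' : Fin t → A, ∑ b : A,
            ((c (s' 0) * ∏ j : Fin t,
                πθ (s' j.castSucc) (a' j) * p (s' j.castSucc) (a' j) (s' j.succ))
              * πθ (s' (Fin.last t)) b * L (s' (Fin.last t)) b * G (Fin.snoc s' (s' 0)))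
              * p (s' (Fin.last t)) b x := by
          refine Finset.sum_congr rfl fun x _ => ?_
          rw [sum_snoc (S := A)]
          refine Finset.sum_congr rfl fun a' _ => Finset.sum_congr rfl fun b _ => ?_
          rw [key, hGx, hsnocS, hsnocA]
          simp only [Fin.snoc_castSucc, Fin.snoc_last]
          ring
        _ = ∑ a' : Fin t → A, ∑ x : S, ∑ b : A,
            ((c (s' 0) * ∏ j : Fin t,
                πθ (s' j.castSucc) (a' j) * p (s' j.castSucc) (a' j) (s' j.succ))
              * πθ (s' (Fin.last t)) b * L (s' (Fin.last t)) b * G (Fin.snoc s' (s' 0)))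
              * p (s' (Fin.last t)) b x := Finset.sum_comm
        _ = 0 := by
          refine Finset.sum_eq_zero fun a' _ => ?_
          rw [Finset.sum_comm]
          have hx : ∀ (M : ℝ) (b : A),
              ∑ x : S, M * p (s' (Fin.last t)) b x = M := by
            intro M b
            rw [← Finset.mul_sum, hp, mul_one]
          simp only [hx]
          have : ∀ b : A,
              (c (s' 0) * ∏ j : Fin t,
                πθ (s' j.castSucc) (a' j) * p (s' j.castSucc) (a' j) (s' j.succ))
              * πθ (s' (Fin.last t)) b * L (s' (Fin.last t)) b * G (Fin.snoc s' (s' 0))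
              = ((c (s' 0) * ∏ j : Fin t,
                  πθ (s' j.castSucc) (a' j) * p (s' j.castSucc) (a' j) (s' j.succ))
                * G (Fin.snoc s' (s' 0)))
                * (πθ (s' (Fin.last t)) b * L (s' (Fin.last t)) b) := by
            intro b; ring
          simp only [this]
          rw [← Finset.mul_sum, hL, mul_zero]

theorem stmt15 {S A : Type} [Fintype S] [Fintype A] [DecidableEq S] [DecidableEq A]
    (T : ℕ) (pinit : S → ℝ) (p : S → A → S → ℝ) (π : ℝ → S → A → ℝ)
    (r : S → ℝ) (θ₀ : ℝ)
    (hπpos : ∀ θ s a, 0 < π θ s a)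
    (hπdiff : ∀ s a, Differentiable ℝ (fun θ => π θ s a))
    (hπsum : ∀ θ s, ∑ a : A, π θ s a = 1)
    (hpinit0 : ∀ s, 0 ≤ pinit s) (hpinit1 : ∑ s : S, pinit s = 1)
    (hp0 : ∀ s a s', 0 ≤ p s a s') (hp1 : ∀ s a, ∑ s' : S, p s a s' = 1) :
    HasDerivAt
      (fun θ => ∑ s : Fin (T + 1) → S, ∑ a : Fin T → A,
        trajProb pinit p (π θ) s a * ∑ t : Fin (T + 1), r (s t))
      (∑ s : Fin (T + 1) → S, ∑ a : Fin T → A,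
        trajProb pinit p (π θ₀) s a *
          ∑ t : Fin T, deriv (fun u => Real.log (π u (s t.castSucc) (a t))) θ₀ *
            ∑ t' ∈ Finset.univ.filter (fun t' : Fin (T + 1) => t.castSucc < t'),
              r (s t'))
      θ₀ := by
  set Lf : S → A → ℝ := fun x b => deriv (fun u => π u x b) θ₀ / π θ₀ x b with hLf
  have hlog : ∀ (x : S) (b : A),
      deriv (fun u => Real.log (π u x b)) θ₀ = Lf x b :=
    fun x b => (((hπdiff x b θ₀).hasDerivAt).log (ne_of_gt (hπpos θ₀ x b))).deriv
  have hL : ∀ x : S, ∑ b : A, π θ₀ x b * Lf x b = 0 := by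
    intro x
    have hsum : HasDerivAt (fun θ => ∑ b : A, π θ x b)
        (∑ b : A, deriv (fun u => π u x b) θ₀) θ₀ :=
      HasDerivAt.fun_sum (fun b _ => (hπdiff x b θ₀).hasDerivAt)
    rw [funext fun θ => hπsum θ x] at hsum
    have h0 : (∑ b : A, deriv (fun u => π u x b) θ₀) = 0 :=
      hsum.unique (hasDerivAt_const θ₀ 1)
    calc ∑ b : A, π θ₀ x b * Lf x b
        = ∑ b : A, deriv (fun u => π u x b) θ₀ := by
          refine Finset.sum_congr rfl fun b _ => ?_
          rw [hLf]
          rw [mul_comm, div_mul_cancel₀ _ (ne_of_gt (hπpos θ₀ x b))]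
      _ = 0 := h0
  -- derivative of each summand
  have hstep : ∀ (s : Fin (T + 1) → S) (a : Fin T → A),
      HasDerivAt (fun θ => trajProb pinit p (π θ) s a * ∑ t : Fin (T + 1), r (s t))
        ((pinit (s 0) * ∑ i : Fin T, (∏ j ∈ Finset.univ.erase i,
            (π θ₀ (s j.castSucc) (a j) * p (s j.castSucc) (a j) (s j.succ)))
            * (deriv (fun u => π u (s i.castSucc) (a i)) θ₀
                * p (s i.castSucc) (a i) (s i.succ)))
          * ∑ t : Fin (T + 1), r (s t)) θ₀ := by
    intro s a
    have hprod := HasDerivAt.fun_finsetProd (u := (Finset.univ : Finset (Fin T))) (x := θ₀)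
      (f := fun i θ => π θ (s i.castSucc) (a i) * p (s i.castSucc) (a i) (s i.succ))
      (f' := fun i => deriv (fun u => π u (s i.castSucc) (a i)) θ₀
          * p (s i.castSucc) (a i) (s i.succ))
      (fun i _ => ((hπdiff _ _ θ₀).hasDerivAt).mul_const _)
    simp only [smul_eq_mul] at hprod
    exact (hprod.const_mul (pinit (s 0))).mul_const _
  have H := HasDerivAt.fun_sum (fun s (_ : s ∈ (Finset.univ : Finset (Fin (T + 1) → S))) =>
    HasDerivAt.fun_sum (fun a (_ : a ∈ (Finset.univ : Finset (Fin T → A))) => hstep s a))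
  -- pointwise identity for the derivative of the trajectory probability
  have hpoint : ∀ (s : Fin (T + 1) → S) (a : Fin T → A),
      (pinit (s 0) * ∑ i : Fin T, (∏ j ∈ Finset.univ.erase i,
          (π θ₀ (s j.castSucc) (a j) * p (s j.castSucc) (a j) (s j.succ)))
          * (deriv (fun u => π u (s i.castSucc) (a i)) θ₀
              * p (s i.castSucc) (a i) (s i.succ)))
      = ∑ i : Fin T, trajProb pinit p (π θ₀) s a * Lf (s i.castSucc) (a i) := by
    intro s a
    rw [Finset.mul_sum]
    refine Finset.sum_congr rfl fun i _ => ?_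
    unfold trajProb
    rw [← Finset.prod_erase_mul Finset.univ _ (Finset.mem_univ i), hLf]
    have hne : π θ₀ (s i.castSucc) (a i) ≠ 0 := ne_of_gt (hπpos θ₀ _ _)
    field_simp
  -- the zero (baseline) terms
  have hz : ∀ i : Fin T,
      ∑ s : Fin (T + 1) → S, ∑ a : Fin T → A,
        trajProb pinit p (π θ₀) s a * Lf (s i.castSucc) (a i) *
          ∑ t' ∈ Finset.univ.filter (fun t' : Fin (T + 1) => ¬ i.castSucc < t'), r (s t')
        = 0 := by
    intro i
    have hGi : ∀ s s' : Fin (T + 1) → S,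
        (∀ j : Fin (T + 1), (j : ℕ) ≤ (i : ℕ) → s j = s' j) →
        (∑ t' ∈ Finset.univ.filter (fun t' : Fin (T + 1) => ¬ i.castSucc < t'), r (s t'))
          = ∑ t' ∈ Finset.univ.filter (fun t' : Fin (T + 1) => ¬ i.castSucc < t'), r (s' t') := by
      intro s s' h
      refine Finset.sum_congr rfl fun t' ht' => ?_
      have hmem := (Finset.mem_filter.mp ht').2
      have hle : (t' : ℕ) ≤ (i : ℕ) := by
        have := not_lt.mp hmem
        simpa [Fin.le_def] using this
      rw [h t' hle]
    exact marg_zero (π θ₀) p Lf (fun x => hπsum θ₀ x) hp1 hL T (i : ℕ) i.isLt pinit _ hGi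
  -- assemble
  have Deq : (∑ s : Fin (T + 1) → S, ∑ a : Fin T → A,
      (pinit (s 0) * ∑ i : Fin T, (∏ j ∈ Finset.univ.erase i,
          (π θ₀ (s j.castSucc) (a j) * p (s j.castSucc) (a j) (s j.succ)))
          * (deriv (fun u => π u (s i.castSucc) (a i)) θ₀
              * p (s i.castSucc) (a i) (s i.succ)))
        * ∑ t : Fin (T + 1), r (s t))
      = ∑ s : Fin (T + 1) → S, ∑ a : Fin T → A,
        trajProb pinit p (π θ₀) s a *
          ∑ t : Fin T, deriv (fun u => Real.log (π u (s t.castSucc) (a t))) θ₀ *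
            ∑ t' ∈ Finset.univ.filter (fun t' : Fin (T + 1) => t.castSucc < t'),
              r (s t') := by
    calc
      _ = ∑ s : Fin (T + 1) → S, ∑ a : Fin T → A, ∑ i : Fin T,
          (trajProb pinit p (π θ₀) s a * Lf (s i.castSucc) (a i) *
              ∑ t' ∈ Finset.univ.filter (fun t' : Fin (T + 1) => i.castSucc < t'), r (s t')
            + trajProb pinit p (π θ₀) s a * Lf (s i.castSucc) (a i) *
              ∑ t' ∈ Finset.univ.filter (fun t' : Fin (T + 1) => ¬ i.castSucc < t'),
                r (s t')) := by
        refine Finset.sum_congr rfl fun s _ => Finset.sum_congr rfl fun a _ => ?_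
        rw [hpoint, Finset.sum_mul]
        refine Finset.sum_congr rfl fun i _ => ?_
        rw [← mul_add,
          Finset.sum_filter_add_sum_filter_not Finset.univ
            (fun t' : Fin (T + 1) => i.castSucc < t') (fun t' => r (s t'))]
      _ = (∑ s : Fin (T + 1) → S, ∑ a : Fin T → A, ∑ i : Fin T,
            trajProb pinit p (π θ₀) s a * Lf (s i.castSucc) (a i) *
              ∑ t' ∈ Finset.univ.filter (fun t' : Fin (T + 1) => i.castSucc < t'), r (s t'))
          + ∑ s : Fin (T + 1) → S, ∑ a : Fin T → A, ∑ i : Fin T,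
            trajProb pinit p (π θ₀) s a * Lf (s i.castSucc) (a i) *
              ∑ t' ∈ Finset.univ.filter (fun t' : Fin (T + 1) => ¬ i.castSucc < t'),
                r (s t') := by
        simp only [Finset.sum_add_distrib]
      _ = (∑ s : Fin (T + 1) → S, ∑ a : Fin T → A, ∑ i : Fin T,
            trajProb pinit p (π θ₀) s a * Lf (s i.castSucc) (a i) *
              ∑ t' ∈ Finset.univ.filter (fun t' : Fin (T + 1) => i.castSucc < t'), r (s t'))
          + 0 := by
        congr 1
        calc
          _ = ∑ s : Fin (T + 1) → S, ∑ i : Fin T, ∑ a : Fin T → A,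
              trajProb pinit p (π θ₀) s a * Lf (s i.castSucc) (a i) *
                ∑ t' ∈ Finset.univ.filter (fun t' : Fin (T + 1) => ¬ i.castSucc < t'),
                  r (s t') := Finset.sum_congr rfl fun s _ => Finset.sum_comm
          _ = ∑ i : Fin T, ∑ s : Fin (T + 1) → S, ∑ a : Fin T → A,
              trajProb pinit p (π θ₀) s a * Lf (s i.castSucc) (a i) *
                ∑ t' ∈ Finset.univ.filter (fun t' : Fin (T + 1) => ¬ i.castSucc < t'),
                  r (s t') := Finset.sum_comm
          _ = 0 := Finset.sum_eq_zero fun i _ => hz i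
      _ = _ := by
        rw [add_zero]
        refine Finset.sum_congr rfl fun s _ => Finset.sum_congr rfl fun a _ => ?_
        rw [Finset.mul_sum]
        refine Finset.sum_congr rfl fun i _ => ?_
        rw [hlog, mul_assoc]
  exact Deq ▸ H
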